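/- Under the strong mixing condition — there exist 0 < σ₋ < σ₊ < ∞ and a probability measure φ such that σ₋ φ(A) ≤ M_p(x, A) ≤ σ₊ φ(A) for all p, x, A, and the potentials are such that Q_p h(x) = M_p(g_{p+1} h)(x) with all g_p positive and bounded — set ρ = 1 − σ₋/σ₊. Then for all bounded measurable h, all ℓ < n: ‖(Q_{ℓ+1} ⋯ Q_{n−1}(h − η_n h)) / (η_{ℓ+1} Q_{ℓ+1} ⋯ Q_{n−1} 1_X)‖_∞ ≤ (ρ^{n−ℓ−1} / (1 − ρ)) osc(h), where osc(h) = sup_{x,x'} |h(x) − h(x')|. -/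

import Mathlib

open MeasureTheory ProbabilityTheory Filter

/-- Oscillation (semi-)norm of a real-valued function. -/
noncomputable def oscNorm {X : Type*} (h : X → ℝ) : ℝ := ⨆ p : X × X, |h p.1 - h p.2|

section helpers
variable {X : Type*} [MeasurableSpace X] [Nonempty X]

omit [MeasurableSpace X] [Nonempty X] in
lemma FK.osc_le {h : X → ℝ} {C : ℝ} (hbd : ∀ x, |h x| ≤ C) (x y : X) :
    |h x - h y| ≤ oscNorm h := by
  have hbdd : BddAbove (Set.range fun p : X × X => |h p.1 - h p.2|) := by
    refine ⟨2 * C, ?_⟩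
    rintro r ⟨p, rfl⟩
    calc |h p.1 - h p.2| ≤ |h p.1| + |h p.2| := abs_sub _ _
      _ ≤ C + C := add_le_add (hbd _) (hbd _)
      _ = 2 * C := by ring
  exact le_ciSup hbdd (x, y)

omit [MeasurableSpace X] in
lemma FK.osc_nonneg {h : X → ℝ} {C : ℝ} (hbd : ∀ x, |h x| ≤ C) : 0 ≤ oscNorm h := by
  have := FK.osc_le hbd (Classical.arbitrary X) (Classical.arbitrary X)
  simpa using this

omit [MeasurableSpace X] in
lemma FK.osc_center {h : X → ℝ} {C : ℝ} (hbd : ∀ x, |h x| ≤ C) :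
    ∃ c : ℝ, ∀ x, |h x - c| ≤ oscNorm h / 2 := by
  set S := sSup (Set.range h) with hS
  set I := sInf (Set.range h) with hI
  have hne : (Set.range h).Nonempty := Set.range_nonempty h
  have hba : BddAbove (Set.range h) := ⟨C, by rintro r ⟨x, rfl⟩; exact (abs_le.1 (hbd x)).2⟩
  have hbb : BddBelow (Set.range h) := ⟨-C, by rintro r ⟨x, rfl⟩; exact (abs_le.1 (hbd x)).1⟩
  have hSI : S - I ≤ oscNorm h := by
    have h1 : ∀ y, S - oscNorm h ≤ h y := by
      intro y
      have h2 : ∀ x, h x ≤ oscNorm h + h y := fun x => by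
        have := (abs_le.1 (FK.osc_le hbd x y)).2
        linarith
      have : S ≤ oscNorm h + h y := csSup_le hne (by rintro r ⟨x, rfl⟩; exact h2 x)
      linarith
    have : S - oscNorm h ≤ I := le_csInf hne (by rintro r ⟨y, rfl⟩; exact h1 y)
    linarith
  refine ⟨(S + I) / 2, fun x => ?_⟩
  have hx1 : h x ≤ S := le_csSup hba ⟨x, rfl⟩
  have hx2 : I ≤ h x := csInf_le hbb ⟨x, rfl⟩
  rw [abs_le]; constructor <;> [linarith; linarith]

omit [Nonempty X] in
lemma FK.integrable_of_bdd {ν : Measure X} [IsFiniteMeasure ν] {f : X → ℝ} (hf : Measurable f)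
    {D : ℝ} (hbd : ∀ x, |f x| ≤ D) : Integrable f ν :=
  (integrable_const D).mono' hf.aestronglyMeasurable (ae_of_all _ hbd)

/-- One-sided half of the key Doeblin estimate, for a single measure. -/
lemma FK.doeblin_half {μ φ : Measure X} [IsFiniteMeasure μ] [IsProbabilityMeasure φ]
    {a b : ℝ} (ha : 0 < a) (hab : a ≤ b)
    (hsand : ∀ f : X → ℝ, Measurable f → (∀ y, 0 ≤ f y) → (∃ D, ∀ y, |f y| ≤ D) →
      a * ∫ y, f y ∂φ ≤ ∫ y, f y ∂μ ∧ ∫ y, f y ∂μ ≤ b * ∫ y, f y ∂φ)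
    {G : X → ℝ} (hG : Measurable G) (hGpos : ∀ y, 0 < G y) {CG : ℝ} (hGbd : ∀ y, |G y| ≤ CG)
    {v : X → ℝ} (hv : Measurable v) {E : ℝ} (hvbd : ∀ y, |v y| ≤ E) :
    |(∫ y, G y * v y ∂μ) / (∫ y, G y ∂μ)
      - (a / b) * ((∫ y, G y * v y ∂φ) / (∫ y, G y ∂φ))| ≤ (1 - a / b) * E := by
  have hCG : 0 ≤ CG := le_trans (abs_nonneg _) (hGbd (Classical.arbitrary X))
  have hE : 0 ≤ E := le_trans (abs_nonneg _) (hvbd (Classical.arbitrary X))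
  have hb : 0 < b := lt_of_lt_of_le ha hab
  set N1 := ∫ y, G y ∂φ with hN1def
  set T1 := ∫ y, G y ∂μ with hT1def
  set Nv := ∫ y, G y * v y ∂φ with hNvdef
  set Tv := ∫ y, G y * v y ∂μ with hTvdef
  have hGint : ∀ (ν : Measure X) [IsFiniteMeasure ν], Integrable G ν := fun ν _ =>
    FK.integrable_of_bdd hG hGbd
  have hGvmeas : Measurable fun y => G y * v y := hG.mul hv
  have hGvbd : ∀ y, |G y * v y| ≤ CG * E := fun y => by
    rw [abs_mul]; exact mul_le_mul (hGbd y) (hvbd y) (abs_nonneg _) hCG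
  have hGvint : ∀ (ν : Measure X) [IsFiniteMeasure ν], Integrable (fun y => G y * v y) ν :=
    fun ν _ => FK.integrable_of_bdd hGvmeas hGvbd
  have hN1 : 0 < N1 := by
    rw [hN1def]
    rw [integral_pos_iff_support_of_nonneg (fun y => (hGpos y).le) (hGint φ)]
    have : Function.support G = Set.univ := by
      ext y; simp [Function.support, (hGpos y).ne']
    rw [this]; simp
  have hsandG := hsand G hG (fun y => (hGpos y).le) ⟨CG, hGbd⟩
  have hT1low : a * N1 ≤ T1 := hsandG.1
  have hT1high : T1 ≤ b * N1 := hsandG.2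
  have hT1 : 0 < T1 := lt_of_lt_of_le (by positivity) hT1low
  have hsub : ∀ (ν : Measure X) [IsFiniteMeasure ν],
      (∫ y, G y * (E - v y) ∂ν) = E * (∫ y, G y ∂ν) - ∫ y, G y * v y ∂ν := by
    intro ν _
    have : (fun y => G y * (E - v y)) = fun y => E * G y - G y * v y := by
      funext y; ring
    rw [this, integral_sub ((hGint ν).const_mul E) (hGvint ν), integral_const_mul E (fun y => G y)]
  have hadd : ∀ (ν : Measure X) [IsFiniteMeasure ν],
      (∫ y, G y * (E + v y) ∂ν) = E * (∫ y, G y ∂ν) + ∫ y, G y * v y ∂ν := by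
    intro ν _
    have : (fun y => G y * (E + v y)) = fun y => E * G y + G y * v y := by
      funext y; ring
    rw [this, integral_add ((hGint ν).const_mul E) (hGvint ν), integral_const_mul E (fun y => G y)]
  have hmeas1 : Measurable fun y => G y * (E - v y) := hG.mul (measurable_const.sub hv)
  have hmeas2 : Measurable fun y => G y * (E + v y) := hG.mul (measurable_const.add hv)
  have hbd1 : ∀ y, |G y * (E - v y)| ≤ CG * (2 * E) := fun y => by
    rw [abs_mul]
    refine mul_le_mul (hGbd y) ?_ (abs_nonneg _) hCG
    have := abs_le.1 (hvbd y); rw [abs_le]; constructor <;> linarith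
  have hbd2 : ∀ y, |G y * (E + v y)| ≤ CG * (2 * E) := fun y => by
    rw [abs_mul]
    refine mul_le_mul (hGbd y) ?_ (abs_nonneg _) hCG
    have := abs_le.1 (hvbd y); rw [abs_le]; constructor <;> linarith
  have hnn1 : ∀ y, 0 ≤ G y * (E - v y) := fun y =>
    mul_nonneg (hGpos y).le (by have := abs_le.1 (hvbd y); linarith)
  have hnn2 : ∀ y, 0 ≤ G y * (E + v y) := fun y =>
    mul_nonneg (hGpos y).le (by have := abs_le.1 (hvbd y); linarith)
  have h1 := (hsand _ hmeas1 hnn1 ⟨_, hbd1⟩).1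
  have h2 := (hsand _ hmeas2 hnn2 ⟨_, hbd2⟩).1
  rw [hsub μ, hsub φ] at h1
  rw [hadd μ, hadd φ] at h2
  have hNnn1 : 0 ≤ E * N1 - Nv := by
    have := integral_nonneg (μ := φ) (f := fun y => G y * (E - v y)) hnn1; rw [hsub φ] at this; linarith
  have hNnn2 : 0 ≤ E * N1 + Nv := by
    have := integral_nonneg (μ := φ) (f := fun y => G y * (E + v y)) hnn2; rw [hadd φ] at this; linarith
  have hX : |b * (Tv * N1) - a * (Nv * T1)| ≤ (b - a) * E * (T1 * N1) := by
    rw [abs_le]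
    constructor
    · nlinarith [mul_nonneg (mul_nonneg ha.le (sub_nonneg.2 hT1high)) hNnn2,
        mul_le_mul_of_nonneg_left h2 (mul_nonneg hb.le hN1.le)]
    · nlinarith [mul_nonneg (mul_nonneg ha.le (sub_nonneg.2 hT1high)) hNnn1,
        mul_le_mul_of_nonneg_left h1 (mul_nonneg hb.le hN1.le)]
  have hrw : Tv / T1 - a / b * (Nv / N1)
      = (b * (Tv * N1) - a * (Nv * T1)) / (b * (T1 * N1)) := by
    field_simp
  rw [hrw, abs_div, abs_of_pos (by positivity : (0:ℝ) < b * (T1 * N1))]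
  rw [div_le_iff₀ (by positivity)]
  calc |b * (Tv * N1) - a * (Nv * T1)| ≤ (b - a) * E * (T1 * N1) := hX
    _ = (1 - a / b) * E * (b * (T1 * N1)) := by field_simp

/-- Two-point contraction: the Doeblin/Dobrushin estimate. -/
lemma FK.doeblin_contract {μ μ' φ : Measure X} [IsFiniteMeasure μ] [IsFiniteMeasure μ']
    [IsProbabilityMeasure φ]
    {a b : ℝ} (ha : 0 < a) (hab : a ≤ b)
    (hsand : ∀ f : X → ℝ, Measurable f → (∀ y, 0 ≤ f y) → (∃ D, ∀ y, |f y| ≤ D) →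
      a * ∫ y, f y ∂φ ≤ ∫ y, f y ∂μ ∧ ∫ y, f y ∂μ ≤ b * ∫ y, f y ∂φ)
    (hsand' : ∀ f : X → ℝ, Measurable f → (∀ y, 0 ≤ f y) → (∃ D, ∀ y, |f y| ≤ D) →
      a * ∫ y, f y ∂φ ≤ ∫ y, f y ∂μ' ∧ ∫ y, f y ∂μ' ≤ b * ∫ y, f y ∂φ)
    {G : X → ℝ} (hG : Measurable G) (hGpos : ∀ y, 0 < G y) {CG : ℝ} (hGbd : ∀ y, |G y| ≤ CG)
    {u : X → ℝ} (hu : Measurable u) {D : ℝ} (hubd : ∀ y, |u y| ≤ D) :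
    |(∫ y, G y * u y ∂μ) / (∫ y, G y ∂μ)
      - (∫ y, G y * u y ∂μ') / (∫ y, G y ∂μ')| ≤ (1 - a / b) * oscNorm u := by
  have hb : 0 < b := lt_of_lt_of_le ha hab
  obtain ⟨c, hc⟩ := FK.osc_center hubd
  set E := oscNorm u / 2 with hEdef
  have hv : Measurable fun y => u y - c := hu.sub measurable_const
  have hGint : ∀ (ν : Measure X) [IsFiniteMeasure ν], Integrable G ν := fun ν _ =>
    FK.integrable_of_bdd hG hGbd
  have hCG : 0 ≤ CG := le_trans (abs_nonneg _) (hGbd (Classical.arbitrary X))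
  have hGvbd : ∀ y, |G y * (u y - c)| ≤ CG * E := fun y => by
    rw [abs_mul]; exact mul_le_mul (hGbd y) (hc y) (abs_nonneg _) hCG
  have hGvint : ∀ (ν : Measure X) [IsFiniteMeasure ν],
      Integrable (fun y => G y * (u y - c)) ν := fun ν _ =>
    FK.integrable_of_bdd (hG.mul hv) hGvbd
  have hN1 : 0 < ∫ y, G y ∂φ := by
    rw [integral_pos_iff_support_of_nonneg (fun y => (hGpos y).le) (hGint φ)]
    have : Function.support G = Set.univ := by
      ext y; simp [Function.support, (hGpos y).ne']
    rw [this]; simp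
  have hT1 : 0 < ∫ y, G y ∂μ :=
    lt_of_lt_of_le (by positivity)
      (hsand G hG (fun y => (hGpos y).le) ⟨CG, hGbd⟩).1
  have hT1' : 0 < ∫ y, G y ∂μ' :=
    lt_of_lt_of_le (by positivity)
      (hsand' G hG (fun y => (hGpos y).le) ⟨CG, hGbd⟩).1
  have hsplit : ∀ (ν : Measure X) [IsFiniteMeasure ν], (0 < ∫ y, G y ∂ν) →
      (∫ y, G y * u y ∂ν) / (∫ y, G y ∂ν)
        = (∫ y, G y * (u y - c) ∂ν) / (∫ y, G y ∂ν) + c := by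
    intro ν _ hpos
    have : (fun y => G y * u y) = fun y => G y * (u y - c) + c * G y := by
      funext y; ring
    rw [this, integral_add (hGvint ν) ((hGint ν).const_mul c),
      integral_const_mul c (fun y => G y), add_div, mul_div_assoc,
      div_self hpos.ne', mul_one]
  have k1 := FK.doeblin_half (μ := μ) ha hab hsand hG hGpos hGbd hv hc
  have k2 := FK.doeblin_half (μ := μ') ha hab hsand' hG hGpos hGbd hv hc
  rw [hsplit μ hT1, hsplit μ' hT1']
  have hosc : oscNorm u = 2 * E := by rw [hEdef]; ring
  have habneg : 0 ≤ 1 - a / b := by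
    rw [sub_nonneg, div_le_one hb]; exact hab
  calc |(∫ y, G y * (u y - c) ∂μ) / (∫ y, G y ∂μ) + c
        - ((∫ y, G y * (u y - c) ∂μ') / (∫ y, G y ∂μ') + c)|
      = |((∫ y, G y * (u y - c) ∂μ) / (∫ y, G y ∂μ)
            - a / b * ((∫ y, G y * (u y - c) ∂φ) / (∫ y, G y ∂φ)))
          - ((∫ y, G y * (u y - c) ∂μ') / (∫ y, G y ∂μ')
            - a / b * ((∫ y, G y * (u y - c) ∂φ) / (∫ y, G y ∂φ)))| := by congr 1; ring
    _ ≤ _ + _ := abs_sub _ _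
    _ ≤ (1 - a / b) * E + (1 - a / b) * E := add_le_add k1 k2
    _ = (1 - a / b) * oscNorm u := by rw [hosc]; ring

end helpers

/-- Under the strong mixing condition, the normalized Feynman-Kac operators contract
at geometric rate `ρ = 1 - σ₋/σ₊`:
`‖Q_{ℓ+1}⋯Q_{n-1}(h - η_n h) / (η_{ℓ+1} Q_{ℓ+1}⋯Q_{n-1} 1)‖_∞
  ≤ ρ^{n-ℓ-1} osc(h)/(1-ρ)`. -/
theorem stmt6 {X : Type*} [MeasurableSpace X] [Nonempty X]
    (M : ℕ → Kernel X X) [∀ p, IsMarkovKernel (M p)]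
    (g : ℕ → X → ℝ) (hgmeas : ∀ p, Measurable (g p))
    (hgpos : ∀ p x, 0 < g p x) (B : ℝ) (hgbd : ∀ p x, g p x ≤ B)
    (σm σp : ENNReal) (hσm : 0 < σm) (hσmp : σm < σp) (hσp : σp < ⊤)
    (φ : Measure X) [IsProbabilityMeasure φ]
    (hmix : ∀ p x (A : Set X), MeasurableSet A →
      σm * φ A ≤ (M p) x A ∧ (M p) x A ≤ σp * φ A)
    (Qop : ℕ → (X → ℝ) → X → ℝ)
    (hQop : ∀ p h x, Qop p h x = ∫ y, g (p + 1) y * h y ∂((M p) x))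
    (Qprod : ℕ → ℕ → (X → ℝ) → X → ℝ)
    (hQprod0 : ∀ m h, Qprod m m h = h)
    (hQprodS : ∀ m n h, m ≤ n → Qprod m (n + 1) h = Qprod m n (Qop n h))
    (η : ℕ → Measure X) [∀ n, IsProbabilityMeasure (η n)]
    (hrec : ∀ n (h : X → ℝ), Measurable h → (∃ C, ∀ x, |h x| ≤ C) →
      (∫ x, h x ∂(η (n + 1))) * (∫ x, Qop n (fun _ => 1) x ∂(η n))
        = ∫ x, Qop n h x ∂(η n))
    (ρ : ℝ) (hρ : ρ = 1 - (σm / σp).toReal) :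
    ∀ (h : X → ℝ), Measurable h → (∃ C, ∀ x, |h x| ≤ C) → ∀ ℓ n, ℓ < n → ∀ x,
      |Qprod (ℓ + 1) n (fun y => h y - ∫ z, h z ∂(η n)) x|
          / (∫ x', Qprod (ℓ + 1) n (fun _ => 1) x' ∂(η (ℓ + 1)))
        ≤ (ρ ^ (n - ℓ - 1) / (1 - ρ)) * oscNorm h := by
  classical
  have x0 : X := Classical.arbitrary X
  -- scalar setup
  set a : ℝ := σm.toReal with hadef
  set b : ℝ := σp.toReal with hbdef
  have hσmne : σm ≠ ⊤ := (hσmp.trans hσp).ne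
  have ha : 0 < a := ENNReal.toReal_pos hσm.ne' hσmne
  have hb : 0 < b := ENNReal.toReal_pos (hσm.trans hσmp).ne' hσp.ne
  have hab : a ≤ b := (ENNReal.toReal_le_toReal hσmne hσp.ne).2 hσmp.le
  have hρab : ρ = 1 - a / b := by rw [hρ, ENNReal.toReal_div]
  have hρnn : 0 ≤ ρ := by
    have : a / b ≤ 1 := (div_le_one hb).2 hab
    rw [hρab]; linarith
  have h1ρ : 1 - ρ = a / b := by rw [hρab]; ring
  have h1ρpos : 0 < 1 - ρ := by rw [h1ρ]; positivity
  have hB : 0 < B := lt_of_lt_of_le (hgpos 0 x0) (hgbd 0 x0)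
  have hgabs : ∀ p y, |g p y| ≤ B := fun p y =>
    abs_le.2 ⟨by have := hgpos p y; linarith, hgbd p y⟩
  -- the sandwich estimate
  have hsand : ∀ p x, ∀ f : X → ℝ, Measurable f → (∀ y, 0 ≤ f y) → (∃ D, ∀ y, |f y| ≤ D) →
      a * ∫ y, f y ∂φ ≤ ∫ y, f y ∂((M p) x) ∧ ∫ y, f y ∂((M p) x) ≤ b * ∫ y, f y ∂φ := by
    intro p x f hf hnn hbdd
    obtain ⟨D, hD⟩ := hbdd
    have hle1 : (σm • φ : Measure X) ≤ (M p) x := by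
      rw [Measure.le_iff]; intro s hs
      rw [Measure.smul_apply, smul_eq_mul]; exact (hmix p x s hs).1
    have hle2 : (M p) x ≤ (σp • φ : Measure X) := by
      rw [Measure.le_iff]; intro s hs
      rw [Measure.smul_apply, smul_eq_mul]; exact (hmix p x s hs).2
    have hint : Integrable f ((M p) x) := FK.integrable_of_bdd hf hD
    have hintφ : Integrable f φ := FK.integrable_of_bdd hf hD
    have hintp : Integrable f (σp • φ) := by
      rw [integrable_smul_measure (hσm.trans hσmp).ne' hσp.ne]; exact hintφ
    constructor
    · have := integral_mono_measure hle1 (ae_of_all _ hnn) hint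
      rwa [integral_smul_measure, smul_eq_mul] at this
    · have := integral_mono_measure hle2 (ae_of_all _ hnn) hintp
      rwa [integral_smul_measure, smul_eq_mul] at this
  -- one-step facts about Qop
  have qop_meas : ∀ p (f : X → ℝ), Measurable f → Measurable (Qop p f) := by
    intro p f hf
    have he : Qop p f = fun x => ∫ y, g (p + 1) y * f y ∂((M p) x) := funext (hQop p f)
    rw [he]
    have hsm : StronglyMeasurable (fun q : X × X => g (p + 1) q.2 * f q.2) :=
      (((hgmeas (p + 1)).comp measurable_snd).mul (hf.comp measurable_snd)).stronglyMeasurable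
    exact (hsm.integral_kernel_prod_right' (κ := M p)).measurable
  have qop_bd : ∀ p (f : X → ℝ) (D : ℝ), (∀ y, |f y| ≤ D) → ∀ x, |Qop p f x| ≤ B * D := by
    intro p f D hD x
    rw [hQop]
    have hbnd : ∀ᵐ y ∂((M p) x), ‖g (p + 1) y * f y‖ ≤ B * D := by
      refine ae_of_all _ fun y => ?_
      rw [Real.norm_eq_abs, abs_mul]
      exact mul_le_mul (hgabs _ y) (hD y) (abs_nonneg _) hB.le
    have := norm_integral_le_of_norm_le_const (μ := (M p) x) hbnd
    simpa [Real.norm_eq_abs, measure_univ] using this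
  have qop_nonneg : ∀ p (f : X → ℝ), (∀ y, 0 ≤ f y) → ∀ x, 0 ≤ Qop p f x := by
    intro p f hnn x
    rw [hQop]
    exact integral_nonneg fun y => mul_nonneg (hgpos _ y).le (hnn y)
  have hφg : ∀ p, 0 < ∫ y, g p y ∂φ := by
    intro p
    rw [integral_pos_iff_support_of_nonneg (fun y => (hgpos p y).le)
      (FK.integrable_of_bdd (hgmeas p) (hgabs p))]
    have : Function.support (g p) = Set.univ := by
      ext y; simp [Function.support, (hgpos p y).ne']
    rw [this]; simp
  have qop_low : ∀ p (f : X → ℝ), Measurable f → (∀ D : ℝ, True) → ∀ (D : ℝ), (∀ y, |f y| ≤ D) →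
      ∀ δ : ℝ, 0 < δ → (∀ y, δ ≤ f y) → ∀ x, δ * (a * ∫ y, g (p + 1) y ∂φ) ≤ Qop p f x := by
    intro p f hf _ D hD δ hδ hδf x
    rw [hQop]
    have i1 : Integrable (fun y => δ * g (p + 1) y) ((M p) x) :=
      (FK.integrable_of_bdd (hgmeas _) (hgabs _)).const_mul δ
    have i2 : Integrable (fun y => g (p + 1) y * f y) ((M p) x) := by
      refine FK.integrable_of_bdd ((hgmeas _).mul hf) (D := B * D) fun y => ?_
      rw [abs_mul]; exact mul_le_mul (hgabs _ y) (hD y) (abs_nonneg _) hB.le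
    have step1 : ∫ y, δ * g (p + 1) y ∂((M p) x) ≤ ∫ y, g (p + 1) y * f y ∂((M p) x) := by
      refine integral_mono i1 i2 fun y => ?_
      have := hδf y
      have hg := (hgpos (p + 1) y).le
      nlinarith
    have step2 : a * ∫ y, g (p + 1) y ∂φ ≤ ∫ y, g (p + 1) y ∂((M p) x) :=
      (hsand p x (g (p + 1)) (hgmeas _) (fun y => (hgpos _ y).le) ⟨B, hgabs _⟩).1
    calc δ * (a * ∫ y, g (p + 1) y ∂φ) ≤ δ * ∫ y, g (p + 1) y ∂((M p) x) := by
          exact mul_le_mul_of_nonneg_left step2 hδ.le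
      _ = ∫ y, δ * g (p + 1) y ∂((M p) x) := (integral_const_mul δ _).symm
      _ ≤ _ := step1
  have qop_lin : ∀ p (f f' : X → ℝ), Measurable f → Measurable f' →
      ∀ (D : ℝ), (∀ y, |f y| ≤ D) → (∀ y, |f' y| ≤ D) → ∀ (c : ℝ) x,
      Qop p (fun y => f y - c * f' y) x = Qop p f x - c * Qop p f' x := by
    intro p f f' hf hf' D hD hD' c x
    rw [hQop, hQop, hQop]
    have he : (fun y => g (p + 1) y * (f y - c * f' y))
        = fun y => g (p + 1) y * f y - c * (g (p + 1) y * f' y) := by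
      funext y; ring
    have i1 : Integrable (fun y => g (p + 1) y * f y) ((M p) x) := by
      refine FK.integrable_of_bdd ((hgmeas _).mul hf) (D := B * D) fun y => ?_
      rw [abs_mul]; exact mul_le_mul (hgabs _ y) (hD y) (abs_nonneg _) hB.le
    have i2 : Integrable (fun y => g (p + 1) y * f' y) ((M p) x) := by
      refine FK.integrable_of_bdd ((hgmeas _).mul hf') (D := B * D) fun y => ?_
      rw [abs_mul]; exact mul_le_mul (hgabs _ y) (hD' y) (abs_nonneg _) hB.le
    rw [he, integral_sub i1 (i2.const_mul c), integral_const_mul c]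
  -- basic properties of Qprod
  have basics : ∀ k m (f : X → ℝ), Measurable f → ∀ D, (∀ y, |f y| ≤ D) →
      Measurable (Qprod m (m + k) f) ∧ (∀ x, |Qprod m (m + k) f x| ≤ B ^ k * D) ∧
      ((∀ y, 0 ≤ f y) → ∀ x, 0 ≤ Qprod m (m + k) f x) ∧
      (∀ δ, 0 < δ → (∀ y, δ ≤ f y) → ∃ δ', 0 < δ' ∧ ∀ x, δ' ≤ Qprod m (m + k) f x) := by
    intro k
    induction k with
    | zero =>
      intro m f hf D hD
      simp only [Nat.add_zero, hQprod0]
      exact ⟨hf, by simpa using hD, fun hnn x => hnn x, fun δ hδ hδf => ⟨δ, hδ, hδf⟩⟩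
    | succ k ih =>
      intro m f hf D hD
      have hD0 : 0 ≤ D := le_trans (abs_nonneg _) (hD x0)
      rw [show m + (k + 1) = m + k + 1 from rfl, hQprodS m (m + k) f (Nat.le_add_right m k)]
      have hQf : Measurable (Qop (m + k) f) := qop_meas _ _ hf
      have hQfb : ∀ x, |Qop (m + k) f x| ≤ B * D := qop_bd _ _ _ hD
      obtain ⟨h1, h2, h3, h4⟩ := ih m (Qop (m + k) f) hQf (B * D) hQfb
      refine ⟨h1, fun x => ?_, fun hnn x => h3 (fun y => qop_nonneg _ _ hnn y) x, ?_⟩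
      · calc |Qprod m (m + k) (Qop (m + k) f) x| ≤ B ^ k * (B * D) := h2 x
          _ = B ^ (k + 1) * D := by rw [pow_succ]; ring
      · intro δ hδ hδf
        have hlow := qop_low (m + k) f hf (fun _ => trivial) D hD δ hδ hδf
        have hpos : 0 < δ * (a * ∫ y, g (m + k + 1) y ∂φ) := by
          have := hφg (m + k + 1); positivity
        exact h4 _ hpos hlow
  -- linearity of Qprod
  have lin : ∀ k m (f f' : X → ℝ), Measurable f → Measurable f' →
      ∀ D, (∀ y, |f y| ≤ D) → (∀ y, |f' y| ≤ D) → ∀ (c : ℝ) x,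
      Qprod m (m + k) (fun y => f y - c * f' y) x
        = Qprod m (m + k) f x - c * Qprod m (m + k) f' x := by
    intro k
    induction k with
    | zero =>
      intro m f f' hf hf' D hD hD' c x
      simp only [Nat.add_zero, hQprod0]
    | succ k ih =>
      intro m f f' hf hf' D hD hD' c x
      rw [show m + (k + 1) = m + k + 1 from rfl,
        hQprodS m (m + k) _ (Nat.le_add_right m k),
        hQprodS m (m + k) f (Nat.le_add_right m k),
        hQprodS m (m + k) f' (Nat.le_add_right m k)]
      have he : Qop (m + k) (fun y => f y - c * f' y)
          = fun y => Qop (m + k) f y - c * Qop (m + k) f' y :=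
        funext (qop_lin (m + k) f f' hf hf' D hD hD' c)
      rw [he]
      exact ih m _ _ (qop_meas _ _ hf) (qop_meas _ _ hf') (B * D)
        (qop_bd _ _ _ hD) (qop_bd _ _ _ hD') c x
  -- peeling the leftmost operator
  have peel : ∀ k m (f : X → ℝ), Qprod m (m + k + 1) f = Qop m (Qprod (m + 1) (m + k + 1) f) := by
    intro k
    induction k with
    | zero =>
      intro m f
      rw [show m + 0 + 1 = m + 1 from rfl, hQprodS m m f le_rfl, hQprod0, hQprod0]
    | succ k ih =>
      intro m f
      rw [show m + (k + 1) + 1 = (m + k + 1) + 1 from rfl,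
        hQprodS m (m + k + 1) f (by omega),
        hQprodS (m + 1) (m + k + 1) f (by omega),
        ih m (Qop (m + k + 1) f)]
  -- the averaging identity
  have avg : ∀ k m (f : X → ℝ), Measurable f → ∀ D, (∀ y, |f y| ≤ D) →
      (∫ x, f x ∂(η (m + k))) * (∫ x, Qprod m (m + k) (fun _ => (1:ℝ)) x ∂(η m))
        = ∫ x, Qprod m (m + k) f x ∂(η m) := by
    intro k
    induction k with
    | zero =>
      intro m f hf D hD
      simp only [Nat.add_zero, hQprod0]
      simp
    | succ k ih =>
      intro m f hf D hD
      have hidx : m + 1 + k = m + k + 1 := by omega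
      rw [show m + (k + 1) = m + k + 1 from rfl, peel k m f, peel k m (fun _ => (1:ℝ))]
      obtain ⟨hFm, hFb, -, -⟩ := basics k (m + 1) f hf D hD
      obtain ⟨hF1m, hF1b, -, -⟩ :=
        basics k (m + 1) (fun _ => (1:ℝ)) measurable_const 1 (by intro y; simp)
      rw [hidx] at hFm hFb hF1m hF1b
      have hr1 := hrec m (Qprod (m + 1) (m + k + 1) f) hFm ⟨B ^ k * D, hFb⟩
      have hr2 := hrec m (Qprod (m + 1) (m + k + 1) (fun _ => (1:ℝ))) hF1m ⟨B ^ k * 1, hF1b⟩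
      have hih := ih (m + 1) f hf D hD
      rw [hidx] at hih
      rw [← hr1, ← hr2, ← hih]
      ring
  -- the contraction estimate
  have contract : ∀ k m (f : X → ℝ), Measurable f → ∀ D, (∀ y, |f y| ≤ D) → ∀ x x',
      |Qprod m (m + k) f x / Qprod m (m + k) (fun _ => (1:ℝ)) x
        - Qprod m (m + k) f x' / Qprod m (m + k) (fun _ => (1:ℝ)) x'|
      ≤ ρ ^ k * oscNorm f := by
    intro k
    induction k with
    | zero =>
      intro m f hf D hD x x'
      simp only [Nat.add_zero, hQprod0, pow_zero, one_mul, div_one]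
      exact FK.osc_le hD x x'
    | succ k ih =>
      intro m f hf D hD x x'
      have hD0 : 0 ≤ D := le_trans (abs_nonneg _) (hD x0)
      have hidx : m + 1 + k = m + k + 1 := by omega
      rw [show m + (k + 1) = m + k + 1 from rfl, peel k m f, peel k m (fun _ => (1:ℝ))]
      obtain ⟨hFm, hFb, -, -⟩ := basics k (m + 1) f hf D hD
      obtain ⟨hF1m, hF1b, -, hF1low⟩ :=
        basics k (m + 1) (fun _ => (1:ℝ)) measurable_const 1 (by intro y; simp)
      obtain ⟨δ', hδ', hF1l⟩ := hF1low 1 one_pos (fun y => le_refl 1)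
      rw [hidx] at hFm hFb hF1m hF1b hF1l
      have hF1pos : ∀ y, 0 < Qprod (m + 1) (m + k + 1) (fun _ => (1:ℝ)) y :=
        fun y => lt_of_lt_of_le hδ' (hF1l y)
      -- the normalized function u and the weight G
      have humeas : Measurable
          (fun y => Qprod (m + 1) (m + k + 1) f y
            / Qprod (m + 1) (m + k + 1) (fun _ => (1:ℝ)) y) := hFm.div hF1m
      have hub : ∀ y, |Qprod (m + 1) (m + k + 1) f y
          / Qprod (m + 1) (m + k + 1) (fun _ => (1:ℝ)) y| ≤ B ^ k * D / δ' := by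
        intro y
        rw [abs_div, abs_of_pos (hF1pos y)]
        exact div_le_div₀ (by positivity) (hFb y) hδ' (hF1l y)
      have hGmeas : Measurable
          (fun y => g (m + 1) y * Qprod (m + 1) (m + k + 1) (fun _ => (1:ℝ)) y) :=
        (hgmeas (m + 1)).mul hF1m
      have hGpos : ∀ y, 0 < g (m + 1) y * Qprod (m + 1) (m + k + 1) (fun _ => (1:ℝ)) y :=
        fun y => mul_pos (hgpos _ y) (hF1pos y)
      have hGbd : ∀ y, |g (m + 1) y * Qprod (m + 1) (m + k + 1) (fun _ => (1:ℝ)) y|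
          ≤ B * (B ^ k * 1) := fun y => by
        rw [abs_mul]; exact mul_le_mul (hgabs _ y) (hF1b y) (abs_nonneg _) hB.le
      have key := FK.doeblin_contract (μ := (M m) x) (μ' := (M m) x') (φ := φ)
        ha hab (hsand m x) (hsand m x') hGmeas hGpos hGbd humeas hub
      have hfun : (fun y => g (m + 1) y * Qprod (m + 1) (m + k + 1) (fun _ => (1:ℝ)) y
            * (Qprod (m + 1) (m + k + 1) f y
              / Qprod (m + 1) (m + k + 1) (fun _ => (1:ℝ)) y))
          = fun y => g (m + 1) y * Qprod (m + 1) (m + k + 1) f y := by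
        funext y
        have h0 := (hF1pos y).ne'
        field_simp
      rw [hfun] at key
      have e1 : ∀ z, Qop m (Qprod (m + 1) (m + k + 1) f) z
          = ∫ y, g (m + 1) y * Qprod (m + 1) (m + k + 1) f y ∂((M m) z) := fun z => hQop m _ z
      have e2 : ∀ z, Qop m (Qprod (m + 1) (m + k + 1) (fun _ => (1:ℝ))) z
          = ∫ y, g (m + 1) y * Qprod (m + 1) (m + k + 1) (fun _ => (1:ℝ)) y ∂((M m) z) :=
        fun z => hQop m _ z
      rw [e1 x, e1 x', e2 x, e2 x']
      have hoscu : oscNorm (fun y => Qprod (m + 1) (m + k + 1) f y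
          / Qprod (m + 1) (m + k + 1) (fun _ => (1:ℝ)) y) ≤ ρ ^ k * oscNorm f := by
        refine Real.iSup_le (fun p => ?_)
          (mul_nonneg (pow_nonneg hρnn k) (FK.osc_nonneg hD))
        have := ih (m + 1) f hf D hD p.1 p.2
        rw [hidx] at this
        exact this
      calc |(∫ y, g (m + 1) y * Qprod (m + 1) (m + k + 1) f y ∂((M m) x))
            / (∫ y, g (m + 1) y * Qprod (m + 1) (m + k + 1) (fun _ => (1:ℝ)) y ∂((M m) x))
          - (∫ y, g (m + 1) y * Qprod (m + 1) (m + k + 1) f y ∂((M m) x'))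
            / (∫ y, g (m + 1) y * Qprod (m + 1) (m + k + 1) (fun _ => (1:ℝ)) y ∂((M m) x'))|
          ≤ (1 - a / b) * oscNorm (fun y => Qprod (m + 1) (m + k + 1) f y
              / Qprod (m + 1) (m + k + 1) (fun _ => (1:ℝ)) y) := key
        _ = ρ * oscNorm (fun y => Qprod (m + 1) (m + k + 1) f y
              / Qprod (m + 1) (m + k + 1) (fun _ => (1:ℝ)) y) := by rw [hρab]
        _ ≤ ρ * (ρ ^ k * oscNorm f) := mul_le_mul_of_nonneg_left hoscu hρnn
        _ = ρ ^ (k + 1) * oscNorm f := by rw [pow_succ]; ring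
  -- lower bound for the average of Qprod 1 against η
  have lower_avg : ∀ k m (x : X),
      (1 - ρ) * Qprod m (m + k) (fun _ => (1:ℝ)) x
        ≤ ∫ x', Qprod m (m + k) (fun _ => (1:ℝ)) x' ∂(η m) := by
    intro k m x
    cases k with
    | zero =>
      simp only [Nat.add_zero, hQprod0]
      simp only [integral_const, probReal_univ, smul_eq_mul, one_mul, mul_one]
      linarith
    | succ k =>
      have hidx : m + 1 + k = m + k + 1 := by omega
      rw [show m + (k + 1) = m + k + 1 from rfl, peel k m (fun _ => (1:ℝ))]
      obtain ⟨hF1m, hF1b, hF1nn, -⟩ :=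
        basics k (m + 1) (fun _ => (1:ℝ)) measurable_const 1 (by intro y; simp)
      rw [hidx] at hF1m hF1b
      have hF1nn' := hF1nn (fun y => zero_le_one)
      rw [hidx] at hF1nn'
      -- pointwise comparison through the sandwich
      have hGmeas : Measurable
          (fun y => g (m + 1) y * Qprod (m + 1) (m + k + 1) (fun _ => (1:ℝ)) y) :=
        (hgmeas (m + 1)).mul hF1m
      have hGnn : ∀ y, 0 ≤ g (m + 1) y * Qprod (m + 1) (m + k + 1) (fun _ => (1:ℝ)) y :=
        fun y => mul_nonneg (hgpos _ y).le (hF1nn' y)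
      have hGbd : ∀ y, |g (m + 1) y * Qprod (m + 1) (m + k + 1) (fun _ => (1:ℝ)) y|
          ≤ B * (B ^ k * 1) := fun y => by
        rw [abs_mul]; exact mul_le_mul (hgabs _ y) (hF1b y) (abs_nonneg _) hB.le
      set N := ∫ y, g (m + 1) y * Qprod (m + 1) (m + k + 1) (fun _ => (1:ℝ)) y ∂φ with hNdef
      have hNnn : 0 ≤ N := integral_nonneg hGnn
      have hpt : ∀ x', (1 - ρ) * Qop m (Qprod (m + 1) (m + k + 1) (fun _ => (1:ℝ))) x
          ≤ Qop m (Qprod (m + 1) (m + k + 1) (fun _ => (1:ℝ))) x' := by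
        intro x'
        have hup := (hsand m x _ hGmeas hGnn ⟨_, hGbd⟩).2
        have hlo := (hsand m x' _ hGmeas hGnn ⟨_, hGbd⟩).1
        rw [hQop m _ x, hQop m _ x']
        rw [h1ρ]
        have : a / b * ∫ y, g (m + 1) y * Qprod (m + 1) (m + k + 1) (fun _ => (1:ℝ)) y ∂((M m) x)
            ≤ a / b * (b * N) := by
          exact mul_le_mul_of_nonneg_left hup (by positivity)
        calc a / b * ∫ y, g (m + 1) y * Qprod (m + 1) (m + k + 1) (fun _ => (1:ℝ)) y ∂((M m) x)
            ≤ a / b * (b * N) := this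
          _ = a * N := by field_simp
          _ ≤ _ := hlo
      have hQmeas : Measurable (Qop m (Qprod (m + 1) (m + k + 1) (fun _ => (1:ℝ)))) :=
        qop_meas m _ hF1m
      have hQbd := qop_bd m _ _ hF1b
      have hint : Integrable (Qop m (Qprod (m + 1) (m + k + 1) (fun _ => (1:ℝ)))) (η m) :=
        FK.integrable_of_bdd hQmeas hQbd
      have := integral_mono (μ := η m) (integrable_const _) hint hpt
      simpa [integral_const, measure_univ] using this
  -- final assembly
  intro h hmeas hbdd ℓ n hℓn x
  obtain ⟨C, hC⟩ := hbdd
  obtain ⟨k, rfl⟩ : ∃ k, n = (ℓ + 1) + k := ⟨n - (ℓ + 1), by omega⟩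
  rw [show ℓ + 1 + k - ℓ - 1 = k from by omega]
  set m := ℓ + 1 with hmdef
  set c := ∫ z, h z ∂(η (m + k)) with hcdef
  obtain ⟨hF1m, hF1b, -, hF1low⟩ :=
    basics k m (fun _ => (1:ℝ)) measurable_const 1 (by intro y; simp)
  obtain ⟨δ', hδ'pos, hF1l⟩ := hF1low 1 one_pos (fun y => le_refl 1)
  have hF1pos : ∀ y, 0 < Qprod m (m + k) (fun _ => (1:ℝ)) y := fun y =>
    lt_of_lt_of_le hδ'pos (hF1l y)
  obtain ⟨hFhm, hFhb, -, -⟩ := basics k m h hmeas C hC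
  have hosc0 : 0 ≤ oscNorm h := FK.osc_nonneg hC
  have hF1int : Integrable (Qprod m (m + k) (fun _ => (1:ℝ))) (η m) :=
    FK.integrable_of_bdd hF1m hF1b
  have hFhint : Integrable (Qprod m (m + k) h) (η m) := FK.integrable_of_bdd hFhm hFhb
  set I1 := ∫ x', Qprod m (m + k) (fun _ => (1:ℝ)) x' ∂(η m) with hI1def
  have hI1pos : 0 < I1 := by
    have h1 : (δ' : ℝ) = ∫ _x', (δ' : ℝ) ∂(η m) := by simp [integral_const, measure_univ]
    have h2 : ∫ _x', (δ' : ℝ) ∂(η m) ≤ I1 :=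
      integral_mono (integrable_const _) hF1int hF1l
    linarith
  -- linearity applied to h - c
  have hlin : Qprod m (m + k) (fun y => h y - c) x
      = Qprod m (m + k) h x - c * Qprod m (m + k) (fun _ => (1:ℝ)) x := by
    have he : (fun y => h y - c) = fun y => h y - c * (fun _ => (1:ℝ)) y := by
      funext y; simp
    rw [he]
    exact lin k m h (fun _ => (1:ℝ)) hmeas measurable_const (max C 1)
      (fun y => le_trans (hC y) (le_max_left _ _))
      (fun y => by simpa using le_max_right C 1) c x
  -- the averaging identity for h
  have havg : c * I1 = ∫ x', Qprod m (m + k) h x' ∂(η m) := avg k m h hmeas C hC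
  -- step (i) : |s - c| ≤ ρ^k osc h  where s = Fh x / F1 x
  set s := Qprod m (m + k) h x / Qprod m (m + k) (fun _ => (1:ℝ)) x with hsdef
  have hcon := contract k m h hmeas C hC
  have hptwise : ∀ x', |Qprod m (m + k) h x' - s * Qprod m (m + k) (fun _ => (1:ℝ)) x'|
      ≤ Qprod m (m + k) (fun _ => (1:ℝ)) x' * (ρ ^ k * oscNorm h) := by
    intro x'
    have hne := (hF1pos x').ne'
    have he : Qprod m (m + k) h x' - s * Qprod m (m + k) (fun _ => (1:ℝ)) x'
        = Qprod m (m + k) (fun _ => (1:ℝ)) x'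
          * (Qprod m (m + k) h x' / Qprod m (m + k) (fun _ => (1:ℝ)) x' - s) := by
      field_simp
    rw [he, abs_mul, abs_of_pos (hF1pos x')]
    exact mul_le_mul_of_nonneg_left (hcon x' x) (hF1pos x').le
  have hsc : |s - c| ≤ ρ ^ k * oscNorm h := by
    have hint1 : Integrable
        (fun x' => Qprod m (m + k) h x' - s * Qprod m (m + k) (fun _ => (1:ℝ)) x') (η m) :=
      hFhint.sub (hF1int.const_mul s)
    have e3 : ∫ x', (Qprod m (m + k) h x'
        - s * Qprod m (m + k) (fun _ => (1:ℝ)) x') ∂(η m) = c * I1 - s * I1 := by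
      rw [integral_sub hFhint (hF1int.const_mul s), integral_const_mul, ← havg, ← hI1def]
    have habs1 : |c * I1 - s * I1| ≤ (ρ ^ k * oscNorm h) * I1 := by
      rw [← e3]
      calc |∫ x', (Qprod m (m + k) h x'
            - s * Qprod m (m + k) (fun _ => (1:ℝ)) x') ∂(η m)|
          ≤ ∫ x', |Qprod m (m + k) h x'
            - s * Qprod m (m + k) (fun _ => (1:ℝ)) x'| ∂(η m) := by
            simpa [Real.norm_eq_abs] using norm_integral_le_integral_norm
              (μ := η m) (fun x' => Qprod m (m + k) h x'
                - s * Qprod m (m + k) (fun _ => (1:ℝ)) x')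
        _ ≤ ∫ x', Qprod m (m + k) (fun _ => (1:ℝ)) x' * (ρ ^ k * oscNorm h) ∂(η m) := by
            refine integral_mono hint1.abs (hF1int.mul_const _) hptwise
        _ = (ρ ^ k * oscNorm h) * I1 := by
            rw [integral_mul_const]; ring
    have : |s - c| * I1 ≤ (ρ ^ k * oscNorm h) * I1 := by
      calc |s - c| * I1 = |(s - c) * I1| := by
            rw [abs_mul, abs_of_pos hI1pos]
        _ = |c * I1 - s * I1| := by rw [← abs_neg]; congr 1; ring
        _ ≤ (ρ ^ k * oscNorm h) * I1 := habs1
    exact le_of_mul_le_mul_right this hI1pos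
  -- step (ii) : (1-ρ) F1 x ≤ I1
  have hlow := lower_avg k m x
  rw [← hI1def] at hlow
  -- conclude
  rw [hlin, div_le_iff₀ hI1pos]
  have hnum : |Qprod m (m + k) h x - c * Qprod m (m + k) (fun _ => (1:ℝ)) x|
      ≤ Qprod m (m + k) (fun _ => (1:ℝ)) x * (ρ ^ k * oscNorm h) := by
    have hne := (hF1pos x).ne'
    have he : Qprod m (m + k) h x - c * Qprod m (m + k) (fun _ => (1:ℝ)) x
        = Qprod m (m + k) (fun _ => (1:ℝ)) x * (s - c) := by
      rw [hsdef]; field_simp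
    rw [he, abs_mul, abs_of_pos (hF1pos x)]
    exact mul_le_mul_of_nonneg_left hsc (hF1pos x).le
  calc |Qprod m (m + k) h x - c * Qprod m (m + k) (fun _ => (1:ℝ)) x|
      ≤ Qprod m (m + k) (fun _ => (1:ℝ)) x * (ρ ^ k * oscNorm h) := hnum
    _ ≤ (I1 / (1 - ρ)) * (ρ ^ k * oscNorm h) := by
        refine mul_le_mul_of_nonneg_right ?_ (by positivity)
        rw [le_div_iff₀ h1ρpos]
        linarith
    _ = ρ ^ k / (1 - ρ) * oscNorm h * I1 := by
        field_simp
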